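/- Under the hypotheses of the previous lemma, if an object x ∈ M(H) is both a retract of some j_*(w) (a D-object) and a retract of some k_*(z) (an E-object), then x is a retract of an object induced from the isocomma groupoid (D/E over H) along j ∘ pr₁. -/
import Mathlib


open CategoryTheory

namespace Stmt19

/-! Abstract setting extracted from a Mackey 2-functor `M` and faithful functors
`j : D ⥤ H`, `k : E ⥤ H` of finite groupoids: `MD = M(D)`, `ME = M(E)`, `MH = M(H)`
and `MP = M(D/E over H)` are the values of `M`; `jind = j_*`, `kind = k_*`,
`p1ind = (pr₁)_*` are the induction functors; `jres = j^*`, `p2res = pr₂^*` are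
restriction functors; `adj : j_* ⊣ j^*` is the adjunction, and `mackey` is the Mackey
base-change isomorphism `j^* k_* ≅ (pr₁)_* pr₂^*` for the isocomma square of `j, k`. -/

variable {MD ME MH MP : Type*} [Category MD] [Category ME] [Category MH] [Category MP]
  [Preadditive MD] [Preadditive ME] [Preadditive MH] [Preadditive MP]

/-- If an object `x ∈ M(H)` is both a `D`-object (a retract of some `j_*(w)`) and an
`E`-object (a retract of some `k_*(z)`), then `x` is a retract of an object induced
from the isocomma groupoid `(D/E over H)` along `j ∘ pr₁`, i.e. of
`j_*((pr₁)_*(u))` for some `u ∈ M(D/E over H)`. -/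
theorem retract_of_isocomma_object
    (jind : MD ⥤ MH) (jres : MH ⥤ MD) (kind : ME ⥤ MH)
    (p1ind : MP ⥤ MD) (p2res : ME ⥤ MP)
    [jind.Additive] [jres.Additive] [kind.Additive] [p1ind.Additive] [p2res.Additive]
    (adj : jind ⊣ jres)
    (mackey : kind ⋙ jres ≅ p2res ⋙ p1ind)
    (x : MH)
    (w : MD) (hw : ∃ (s : x ⟶ jind.obj w) (r : jind.obj w ⟶ x), s ≫ r = 𝟙 x)
    (z : ME) (hz : ∃ (s : x ⟶ kind.obj z) (r : kind.obj z ⟶ x), s ≫ r = 𝟙 x) :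
    ∃ (u : MP) (s : x ⟶ jind.obj (p1ind.obj u)) (r : jind.obj (p1ind.obj u) ⟶ x),
      s ≫ r = 𝟙 x := by
  obtain ⟨s₁, r₁, h₁⟩ := hw
  obtain ⟨s₂, r₂, h₂⟩ := hz
  refine ⟨p2res.obj z,
    s₁ ≫ jind.map (adj.homEquiv w x r₁) ≫ jind.map (jres.map s₂ ≫ mackey.hom.app z),
    jind.map (mackey.inv.app z ≫ jres.map r₂) ≫ adj.counit.app x, ?_⟩
  have hε : jind.map (adj.homEquiv w x r₁) ≫ adj.counit.app x = r₁ := by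
    simp [Adjunction.homEquiv_unit]
  simp only [CategoryTheory.Functor.map_comp, Category.assoc]
  slice_lhs 4 5 => rw [← CategoryTheory.Functor.map_comp, Iso.hom_inv_id_app]; erw [CategoryTheory.Functor.map_id]
  rw [Category.id_comp]
  slice_lhs 3 4 => rw [← CategoryTheory.Functor.map_comp, ← CategoryTheory.Functor.map_comp, h₂, CategoryTheory.Functor.map_id, CategoryTheory.Functor.map_id]
  rw [Category.id_comp, hε, h₁]

end Stmt19
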